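/- Let h be the horizontal line y = 0, let L be a finite family of L-shapes all of whose points have positive y-coordinate, and let S be a finite family of vertical segments of the form {x} × [0,b] with b > 0, such that: the horizontal segments of the L-shapes in L have pairwise distinct y-coordinates; the vertical segments of the L-shapes in L together with the segments of S have pairwise distinct x-coordinates; every L-shape in L intersects at least one segment of S; and the family L ∪ S is triangle-free. Assume moreover: (1) no two handles of L-shapes in L intersect; (2) for every ℓ ∈ L the x-coordinate of the right endpoint of ℓ equals the x-coordinate of its rightmost support, and whenever the vertical segment of ℓ₂ ∈ L intersects the horizontal segment of ℓ₁ ∈ L, the right endpoint of ℓ₁ has strictly larger x-coordinate than the right endpoint of ℓ₂; (3) no corner, right endpoint, or top endpoint of an L-shape in L lies below the handle of an L-shape in L; (4) there is no corner of an L-shape in L lying to the left of two intersecting members of L ∪ S; (5) for all ℓ ∈ L and m ∈ L ∪ S with ℓ ∩ m ≠ ∅, the vertical segment of ℓ does not lie entirely to the left of m. Then for all ℓ₁, ℓ₂, ℓ ∈ L such that ℓ₁ and ℓ₂ are in configuration (e) or (f) — meaning their corners (x₁,y₁), (x₂,y₂), right endpoints' x-coordinates r₁, r₂, and top endpoints'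 y-coordinates t₁, t₂ satisfy x₁ < x₂ < r₁, y₁ < y₂ < t₁, and t₁ < t₂ — if the corner of ℓ₁ lies below the horizontal segment of ℓ, then the corner of ℓ₂ also lies below the horizontal segment of ℓ. -/

import Mathlib

open Set

/-- An L-shape, given by its corner `(x, y)`, right endpoint `(r, y)`,
and top endpoint `(x, t)`, with `x < r` and `y < t`. -/
structure LS where
  x : ℝ
  y : ℝ
  r : ℝ
  t : ℝ
  hxr : x < r
  hyt : y < t

/-- The horizontal segment of an L-shape. -/
def LS.hSeg (ℓ : LS) : Set (ℝ × ℝ) := Icc ℓ.x ℓ.r ×ˢ ({ℓ.y} : Set ℝ)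

/-- The vertical segment of an L-shape. -/
def LS.vSeg (ℓ : LS) : Set (ℝ × ℝ) := ({ℓ.x} : Set ℝ) ×ˢ Icc ℓ.y ℓ.t

/-- The L-shape as a subset of the plane. -/
def LS.set (ℓ : LS) : Set (ℝ × ℝ) := ℓ.hSeg ∪ ℓ.vSeg

/-- The intersection graph of a finite family of sets in the plane (each element `a` of the
index family represents the set `toSet a`): two vertices are adjacent exactly when they
represent distinct sets that intersect. -/
def iGraph {α : Type} (F : Finset α) (toSet : α → Set (ℝ × ℝ)) :
    SimpleGraph {a // a ∈ F} where
  Adj a b := toSet a.1 ≠ toSet b.1 ∧ (toSet a.1 ∩ toSet b.1).Nonempty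
  symm := by
    constructor; intro a b h
    exact ⟨h.1.symm, by rw [Set.inter_comm]; exact h.2⟩
  loopless := by constructor; intro a h; exact h.1 rfl

/-- A subset of the plane is an L-shape. -/
def IsLShape (A : Set (ℝ × ℝ)) : Prop := ∃ ℓ : LS, A = ℓ.set

/-- A vertical segment `{x} × [0, b]` with `b > 0`, grounded on the line `y = 0`. -/
structure VSeg where
  x : ℝ
  b : ℝ
  hb : 0 < b

/-- The vertical segment as a subset of the plane. -/
def VSeg.set (s : VSeg) : Set (ℝ × ℝ) := ({s.x} : Set ℝ) ×ˢ Icc (0 : ℝ) s.b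

/-- `m` is a member of the family `L ∪ S`. -/
def InFam (L : Finset LS) (S : Finset VSeg) (m : Set (ℝ × ℝ)) : Prop :=
  (∃ ℓ ∈ L, m = ℓ.set) ∨ (∃ s ∈ S, m = s.set)

/-- The family `L ∪ S` is triangle-free: it has no three pairwise intersecting
distinct members. -/
def TriangleFreeFam (L : Finset LS) (S : Finset VSeg) : Prop :=
  ¬ ∃ m₁ m₂ m₃ : Set (ℝ × ℝ), InFam L S m₁ ∧ InFam L S m₂ ∧ InFam L S m₃ ∧
      m₁ ≠ m₂ ∧ m₁ ≠ m₃ ∧ m₂ ≠ m₃ ∧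
      (m₁ ∩ m₂).Nonempty ∧ (m₁ ∩ m₃).Nonempty ∧ (m₂ ∩ m₃).Nonempty

/-- The `x`-coordinate of the leftmost segment of `S` intersecting `ℓ`
(the leftmost support of `ℓ`). -/
noncomputable def leftSupX (S : Finset VSeg) (ℓ : LS) : ℝ :=
  sInf (VSeg.x '' {s : VSeg | s ∈ S ∧ (ℓ.set ∩ s.set).Nonempty})

/-- The `x`-coordinate of the rightmost segment of `S` intersecting `ℓ`
(the rightmost support of `ℓ`). -/
noncomputable def rightSupX (S : Finset VSeg) (ℓ : LS) : ℝ :=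
  sSup (VSeg.x '' {s : VSeg | s ∈ S ∧ (ℓ.set ∩ s.set).Nonempty})

/-- The handle of `ℓ`: the points of `ℓ` strictly to the left of its leftmost support. -/
noncomputable def handle (S : Finset VSeg) (ℓ : LS) : Set (ℝ × ℝ) :=
  {p ∈ ℓ.set | p.1 < leftSupX S ℓ}

/-- The hook of `ℓ`: the points of `ℓ` strictly to the right of its rightmost support. -/
noncomputable def hook (S : Finset VSeg) (ℓ : LS) : Set (ℝ × ℝ) :=
  {p ∈ ℓ.set | rightSupX S ℓ < p.1}

/-- `p` lies below `s`: `p ∉ s` and the upward vertical ray from `p` meets `s`. -/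
def PBelow (p : ℝ × ℝ) (s : Set (ℝ × ℝ)) : Prop :=
  p ∉ s ∧ ∃ q ∈ s, q.1 = p.1 ∧ p.2 ≤ q.2

/-- `p` lies to the left of `s`: `p ∉ s` and the rightward horizontal ray
from `p` meets `s`. -/
def PLeft (p : ℝ × ℝ) (s : Set (ℝ × ℝ)) : Prop :=
  p ∉ s ∧ ∃ q ∈ s, q.2 = p.2 ∧ p.1 ≤ q.1

/-- The set `r` lies to the left of `s`: every point of `r` lies to the left of `s`. -/
def SetLeft (r s : Set (ℝ × ℝ)) : Prop := ∀ p ∈ r, PLeft p s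

lemma mem_hSeg_iff {ℓ : LS} {a b : ℝ} :
    (a, b) ∈ ℓ.hSeg ↔ (ℓ.x ≤ a ∧ a ≤ ℓ.r) ∧ b = ℓ.y := by
  simp [LS.hSeg]

lemma mem_vSeg_iff {ℓ : LS} {a b : ℝ} :
    (a, b) ∈ ℓ.vSeg ↔ a = ℓ.x ∧ (ℓ.y ≤ b ∧ b ≤ ℓ.t) := by
  simp [LS.vSeg]

lemma mem_vset_iff {s : VSeg} {a b : ℝ} :
    (a, b) ∈ s.set ↔ a = s.x ∧ (0 ≤ b ∧ b ≤ s.b) := by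
  simp [VSeg.set]

lemma corner_mem (ℓ : LS) : (ℓ.x, ℓ.y) ∈ ℓ.set :=
  Or.inl (mem_hSeg_iff.mpr ⟨⟨le_refl _, le_of_lt ℓ.hxr⟩, rfl⟩)

/-- Characterization of supports: any segment of `S` intersecting `ℓ` meets its
horizontal segment. -/
lemma support_char {ℓ : LS} {s : VSeg} (hx : ℓ.x ≠ s.x)
    (h : (ℓ.set ∩ s.set).Nonempty) :
    ℓ.x < s.x ∧ s.x ≤ ℓ.r ∧ ℓ.y ≤ s.b ∧ 0 ≤ ℓ.y := by
  obtain ⟨⟨a, b⟩, hp, hps⟩ := h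
  rw [mem_vset_iff] at hps
  cases hp with
  | inl h' =>
    rw [mem_hSeg_iff] at h'
    refine ⟨?_, ?_, ?_, ?_⟩
    · exact lt_of_le_of_ne (hps.1 ▸ h'.1.1) hx
    · exact hps.1 ▸ h'.1.2
    · exact h'.2 ▸ hps.2.2
    · exact h'.2 ▸ hps.2.1
  | inr h' =>
    rw [mem_vSeg_iff] at h'
    exact absurd (h'.1.symm.trans hps.1) hx

lemma rightSup_mem {S : Finset VSeg} {ℓ : LS}
    (h : ∃ s ∈ S, (ℓ.set ∩ s.set).Nonempty) :
    ∃ s : VSeg, s ∈ S ∧ (ℓ.set ∩ s.set).Nonempty ∧ s.x = rightSupX S ℓ := by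
  classical
  have hfin : (VSeg.x '' {s : VSeg | s ∈ S ∧ (ℓ.set ∩ s.set).Nonempty}).Finite :=
    (S.finite_toSet.subset fun s hs => hs.1).image _
  have hne : (VSeg.x '' {s : VSeg | s ∈ S ∧ (ℓ.set ∩ s.set).Nonempty}).Nonempty := by
    obtain ⟨s, hs, h'⟩ := h; exact ⟨s.x, ⟨s, ⟨hs, h'⟩, rfl⟩⟩
  obtain ⟨s, ⟨hs1, hs2⟩, hs3⟩ := hne.csSup_mem hfin
  exact ⟨s, hs1, hs2, hs3⟩

lemma leftSup_mem {S : Finset VSeg} {ℓ : LS}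
    (h : ∃ s ∈ S, (ℓ.set ∩ s.set).Nonempty) :
    ∃ s : VSeg, s ∈ S ∧ (ℓ.set ∩ s.set).Nonempty ∧ s.x = leftSupX S ℓ := by
  classical
  have hfin : (VSeg.x '' {s : VSeg | s ∈ S ∧ (ℓ.set ∩ s.set).Nonempty}).Finite :=
    (S.finite_toSet.subset fun s hs => hs.1).image _
  have hne : (VSeg.x '' {s : VSeg | s ∈ S ∧ (ℓ.set ∩ s.set).Nonempty}).Nonempty := by
    obtain ⟨s, hs, h'⟩ := h; exact ⟨s.x, ⟨s, ⟨hs, h'⟩, rfl⟩⟩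
  obtain ⟨s, ⟨hs1, hs2⟩, hs3⟩ := hne.csInf_mem hfin
  exact ⟨s, hs1, hs2, hs3⟩

/-- Claim. In the setting of the key lemma, assume additionally
Conditions 1–5 of the reduction. If `ℓ₁, ℓ₂ ∈ L` are in configuration (e) or (f) and the
corner of `ℓ₁` lies below the horizontal segment of `ℓ ∈ L`, then the corner of `ℓ₂`
also lies below the horizontal segment of `ℓ`. -/
theorem stmt_15 (L : Finset LS) (S : Finset VSeg)
    (hpos : ∀ ℓ ∈ L, ∀ p ∈ ℓ.set, 0 < p.2)
    (hy : ∀ ℓ₁ ∈ L, ∀ ℓ₂ ∈ L, ℓ₁ ≠ ℓ₂ → ℓ₁.y ≠ ℓ₂.y)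
    (hxL : ∀ ℓ₁ ∈ L, ∀ ℓ₂ ∈ L, ℓ₁ ≠ ℓ₂ → ℓ₁.x ≠ ℓ₂.x)
    (hxS : ∀ s₁ ∈ S, ∀ s₂ ∈ S, s₁ ≠ s₂ → s₁.x ≠ s₂.x)
    (hxLS : ∀ ℓ ∈ L, ∀ s ∈ S, ℓ.x ≠ s.x)
    (hsup : ∀ ℓ ∈ L, ∃ s ∈ S, (ℓ.set ∩ s.set).Nonempty)
    (htf : TriangleFreeFam L S)
    -- Condition 1: no two handles of L-shapes in `L` intersect
    (h1 : ∀ ℓ₁ ∈ L, ∀ ℓ₂ ∈ L, ℓ₁ ≠ ℓ₂ → ¬(handle S ℓ₁ ∩ handle S ℓ₂).Nonempty)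
    -- Condition 2: empty hooks, and no two L-shapes in configuration (b) or (c)
    (h2a : ∀ ℓ ∈ L, ℓ.r = rightSupX S ℓ)
    (h2b : ∀ ℓ₁ ∈ L, ∀ ℓ₂ ∈ L, ℓ₁ ≠ ℓ₂ →
      (ℓ₂.vSeg ∩ ℓ₁.hSeg).Nonempty → ℓ₂.r < ℓ₁.r)
    -- Condition 3: no corner, right endpoint, or top endpoint below a handle
    (h3 : ∀ ℓ ∈ L, ∀ ℓ' ∈ L,
      ¬PBelow (ℓ.x, ℓ.y) (handle S ℓ') ∧ ¬PBelow (ℓ.r, ℓ.y) (handle S ℓ') ∧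
        ¬PBelow (ℓ.x, ℓ.t) (handle S ℓ'))
    -- Condition 4: no corner to the left of two intersecting members of `L ∪ S`
    (h4 : ∀ ℓ ∈ L, ∀ m₁ m₂ : Set (ℝ × ℝ), InFam L S m₁ → InFam L S m₂ → m₁ ≠ m₂ →
      (m₁ ∩ m₂).Nonempty → ¬(PLeft (ℓ.x, ℓ.y) m₁ ∧ PLeft (ℓ.x, ℓ.y) m₂))
    -- Condition 5: the vertical segment of an L-shape never lies entirely to the left
    -- of a member of `L ∪ S` intersecting it
    (h5 : ∀ ℓ ∈ L, ∀ m : Set (ℝ × ℝ), InFam L S m → (ℓ.set ∩ m).Nonempty →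
      ¬SetLeft ℓ.vSeg m) :
    ∀ ℓ₁ ∈ L, ∀ ℓ₂ ∈ L, ∀ ℓ ∈ L,
      -- configuration (e) or (f)
      ℓ₁.x < ℓ₂.x → ℓ₂.x < ℓ₁.r → ℓ₁.y < ℓ₂.y → ℓ₂.y < ℓ₁.t → ℓ₁.t < ℓ₂.t →
      PBelow (ℓ₁.x, ℓ₁.y) ℓ.hSeg → PBelow (ℓ₂.x, ℓ₂.y) ℓ.hSeg := by
  intro ℓ₁ hℓ₁ ℓ₂ hℓ₂ ℓ hℓ he1 he2 he3 he4 he5 hb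
  -- unpack the hypothesis that the corner of ℓ₁ lies below ℓ.hSeg
  obtain ⟨hnot, ⟨q1, q2⟩, hq, hq1, hq2⟩ := hb
  rw [mem_hSeg_iff] at hq
  have hq1' : q1 = ℓ₁.x := hq1
  have hq2' : ℓ₁.y ≤ q2 := hq2
  subst hq1'
  have hx1l : ℓ.x ≤ ℓ₁.x := hq.1.1
  have hx1r : ℓ₁.x ≤ ℓ.r := hq.1.2
  have hy1l : ℓ₁.y ≤ ℓ.y := hq.2 ▸ hq2'
  have hy1lt : ℓ₁.y < ℓ.y := by
    rcases lt_or_eq_of_le hy1l with h | h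
    · exact h
    · exact absurd (mem_hSeg_iff.mpr ⟨⟨hx1l, hx1r⟩, h⟩) hnot
  -- positivity of corners
  have hy1pos : 0 < ℓ₁.y := hpos ℓ₁ hℓ₁ _ (corner_mem ℓ₁)
  have hy2pos : 0 < ℓ₂.y := hpos ℓ₂ hℓ₂ _ (corner_mem ℓ₂)
  have hypos : 0 < ℓ.y := hpos ℓ hℓ _ (corner_mem ℓ)
  -- ℓ ≠ ℓ₁ and ℓ ≠ ℓ₂
  have hne1 : ℓ ≠ ℓ₁ := by intro h; rw [h] at hy1lt; exact lt_irrefl _ hy1lt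
  have hne2 : ℓ ≠ ℓ₂ := by intro h; rw [h] at hx1l; linarith
  have hne12 : ℓ₁ ≠ ℓ₂ := by intro h; rw [h] at he1; exact lt_irrefl _ he1
  -- the set ℓ.set differs from ℓ₁.set
  have hsetne1 : ℓ.set ≠ ℓ₁.set := by
    intro h
    have hc := corner_mem ℓ₁
    rw [← h] at hc
    cases hc with
    | inl h' => rw [mem_hSeg_iff] at h'; linarith [h'.2]
    | inr h' => rw [mem_vSeg_iff] at h'; linarith [h'.2.1]
  -- L-shape sets differ from grounded segment sets
  have hLneS : ∀ ℓ' ∈ L, ∀ s ∈ S, ℓ'.set ≠ s.set := by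
    intro ℓ' hℓ' s hs h
    have hm : (s.x, (0:ℝ)) ∈ s.set := mem_vset_iff.mpr ⟨rfl, le_refl 0, le_of_lt s.hb⟩
    rw [← h] at hm
    exact lt_irrefl _ (hpos ℓ' hℓ' _ hm)
  -- It suffices to establish the two key inequalities
  suffices hkey : ℓ₂.y < ℓ.y ∧ ℓ₂.x ≤ ℓ.r by
    refine ⟨?_, (ℓ₂.x, ℓ.y), mem_hSeg_iff.mpr ⟨⟨by linarith, hkey.2⟩, rfl⟩, rfl, le_of_lt hkey.1⟩
    intro hmem
    rw [mem_hSeg_iff] at hmem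
    linarith [hmem.2, hkey.1]
  rcases le_or_gt ℓ.y ℓ₁.t with hcase | hcase
  · -- Case 1: ℓ.y ≤ ℓ₁.t, so ℓ.hSeg crosses ℓ₁.vSeg
    have hmeet : ((ℓ₁.x, ℓ.y) : ℝ × ℝ) ∈ ℓ₁.vSeg ∩ ℓ.hSeg :=
      ⟨mem_vSeg_iff.mpr ⟨rfl, le_of_lt hy1lt, hcase⟩,
       mem_hSeg_iff.mpr ⟨⟨hx1l, hx1r⟩, rfl⟩⟩
    have hr : ℓ₁.r < ℓ.r := h2b ℓ hℓ ℓ₁ hℓ₁ hne1 ⟨_, hmeet⟩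
    refine ⟨?_, by linarith⟩
    -- now show ℓ₂.y < ℓ.y
    rcases lt_trichotomy ℓ₂.y ℓ.y with h | h | h
    · exact h
    · exact absurd h.symm (hy ℓ hℓ ℓ₂ hℓ₂ hne2)
    · -- subcase: ℓ.y < ℓ₂.y ; derive a contradiction
      exfalso
      -- every support of ℓ₂ lies strictly to the right of ℓ₁.r
      have hsupfar : ∀ s ∈ S, (ℓ₂.set ∩ s.set).Nonempty → ℓ₁.r < s.x := by
        intro s hs hint
        by_contra hcon
        push_neg at hcon
        obtain ⟨hsx1, hsx2, hsb, _⟩ := support_char (hxLS ℓ₂ hℓ₂ s hs) hint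
        -- triangle ℓ, ℓ₁, s
        refine htf ⟨ℓ.set, ℓ₁.set, s.set, Or.inl ⟨ℓ, hℓ, rfl⟩, Or.inl ⟨ℓ₁, hℓ₁, rfl⟩,
          Or.inr ⟨s, hs, rfl⟩, hsetne1, hLneS ℓ hℓ s hs, hLneS ℓ₁ hℓ₁ s hs, ?_, ?_, ?_⟩
        · exact ⟨(ℓ₁.x, ℓ.y), Or.inl hmeet.2, Or.inr hmeet.1⟩
        · exact ⟨(s.x, ℓ.y), Or.inl (mem_hSeg_iff.mpr ⟨⟨by linarith, by linarith⟩, rfl⟩),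
            mem_vset_iff.mpr ⟨rfl, le_of_lt hypos, by linarith⟩⟩
        · exact ⟨(s.x, ℓ₁.y), Or.inl (mem_hSeg_iff.mpr ⟨⟨by linarith, hcon⟩, rfl⟩),
            mem_vset_iff.mpr ⟨rfl, le_of_lt hy1pos, by linarith⟩⟩
      -- the leftmost support of ℓ₂ is strictly to the right of ℓ₁.r
      obtain ⟨sl, hsl, hsl2, hsl3⟩ := leftSup_mem (hsup ℓ₂ hℓ₂)
      have hleft : ℓ₁.r < leftSupX S ℓ₂ := hsl3 ▸ hsupfar sl hsl hsl2
      -- ℓ₂.r > ℓ₁.r since the rightmost support of ℓ₂ is to the right of ℓ₁.r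
      obtain ⟨sr, hsr, hsr2, hsr3⟩ := rightSup_mem (hsup ℓ₂ hℓ₂)
      have hr2 : ℓ₁.r < ℓ₂.r := by
        rw [h2a ℓ₂ hℓ₂, ← hsr3]; exact hsupfar sr hsr hsr2
      -- so the right endpoint of ℓ₁ lies below the handle of ℓ₂, contradicting h3
      refine (h3 ℓ₁ hℓ₁ ℓ₂ hℓ₂).2.1 ⟨?_, (ℓ₁.r, ℓ₂.y), ?_, rfl, le_of_lt he3⟩
      · intro hmem
        have hmem1 : ((ℓ₁.r, ℓ₁.y) : ℝ × ℝ) ∈ ℓ₂.set := hmem.1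
        rcases hmem1 with h' | h'
        · rw [mem_hSeg_iff] at h'
          exact hy ℓ₁ hℓ₁ ℓ₂ hℓ₂ hne12 h'.2
        · rw [mem_vSeg_iff] at h'; linarith [h'.1]
      · exact ⟨Or.inl (mem_hSeg_iff.mpr ⟨⟨le_of_lt he2, le_of_lt hr2⟩, rfl⟩), hleft⟩
  · -- Case 2: ℓ₁.t < ℓ.y
    refine ⟨by linarith, ?_⟩
    by_contra hcon
    push_neg at hcon
    -- take the rightmost support s of ℓ, with s.x = ℓ.r
    obtain ⟨s, hs, hs2, hs3⟩ := rightSup_mem (hsup ℓ hℓ)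
    have hsx : s.x = ℓ.r := by rw [hs3, ← h2a ℓ hℓ]
    obtain ⟨-, -, hsb, -⟩ := support_char (hxLS ℓ hℓ s hs) hs2
    -- ℓ₁.vSeg lies entirely to the left of s, contradicting h5
    refine h5 ℓ₁ hℓ₁ s.set (Or.inr ⟨s, hs, rfl⟩) ?_ ?_
    · exact ⟨(s.x, ℓ₁.y), Or.inl (mem_hSeg_iff.mpr ⟨⟨hsx ▸ hx1r, by rw [hsx]; linarith⟩, rfl⟩),
        mem_vset_iff.mpr ⟨rfl, le_of_lt hy1pos, by linarith⟩⟩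
    · rintro ⟨a, b⟩ hp
      rw [mem_vSeg_iff] at hp
      refine ⟨?_, (s.x, b), mem_vset_iff.mpr ⟨rfl, by linarith [hp.2.1], by linarith [hp.2.2]⟩,
        rfl, ?_⟩
      · intro hmem
        rw [mem_vset_iff] at hmem
        exact hxLS ℓ₁ hℓ₁ s hs (hp.1 ▸ hmem.1)
      · rw [hp.1, hsx]; exact hx1r
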